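/- Let ŵ_1,...,ŵ_K be a simplex ETF in ℝ^d. For a fixed k, the maximum of the softmax probability p_k(m) = exp(ŵ_k^T m)/Σ_j exp(ŵ_j^T m) over the unit ball {‖m‖ ≤ 1} is attained at m = ŵ_k, with value 1/(1 + (K-1)·exp(-K/(K-1))). -/

import Mathlib

open scoped RealInnerProductSpace BigOperators

/-- For a simplex ETF classifier, the softmax probability of class `k` over the
unit ball is maximized at `m = ŵ_k`, with value `1/(1 + (K-1) e^{-K/(K-1)})`. -/
theorem softmax_max_at_prototype (d K : ℕ) (hK : 2 ≤ K)
    (w : Fin K → EuclideanSpace ℝ (Fin d))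
    (hunit : ∀ j, ‖w j‖ = 1)
    (hpair : ∀ i j : Fin K, i ≠ j → ⟪w i, w j⟫ = -1 / (K - 1))
    (k : Fin K) :
    (Real.exp ⟪w k, w k⟫ / ∑ j : Fin K, Real.exp ⟪w j, w k⟫ =
      1 / (1 + ((K : ℝ) - 1) * Real.exp (-(K : ℝ) / (K - 1)))) ∧
    ∀ m : EuclideanSpace ℝ (Fin d), ‖m‖ ≤ 1 →
      Real.exp ⟪w k, m⟫ / ∑ j : Fin K, Real.exp ⟪w j, m⟫ ≤
      Real.exp ⟪w k, w k⟫ / ∑ j : Fin K, Real.exp ⟪w j, w k⟫ := by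
  have hKR : (2:ℝ) ≤ (K:ℝ) := by exact_mod_cast hK
  have hcpos : (0:ℝ) < (K:ℝ) - 1 := by linarith
  have hcne : ((K:ℝ) - 1) ≠ 0 := ne_of_gt hcpos
  set c : ℝ := -(K:ℝ) / ((K:ℝ) - 1) with hc
  have hself : ∀ i : Fin K, ⟪w i, w i⟫ = (1:ℝ) := by
    intro i
    rw [real_inner_self_eq_norm_sq, hunit i]; norm_num
  have hrow : ∀ i : Fin K, ∑ j : Fin K, ⟪w i, w j⟫ = 0 := by
    intro i
    have h1 : ∀ j : Fin K, ⟪w i, w j⟫ =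
        (-1/((K:ℝ)-1)) + (if j = i then 1 + 1/((K:ℝ)-1) else 0) := by
      intro j
      by_cases h : j = i
      · subst h
        rw [hself j]
        simp
        field_simp
        ring
      · rw [hpair i j (fun h' => h h'.symm)]
        simp [h]
    rw [Finset.sum_congr rfl (fun j _ => h1 j), Finset.sum_add_distrib,
      Finset.sum_const, Finset.card_univ, Fintype.card_fin, Finset.sum_ite_eq']
    simp only [Finset.mem_univ, if_true, nsmul_eq_mul]
    field_simp
    ring
  have hS : (∑ j : Fin K, w j) = 0 := by
    rw [← inner_self_eq_zero (𝕜 := ℝ), sum_inner]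
    exact Finset.sum_eq_zero fun i _ => by rw [inner_sum]; exact hrow i
  have hinm : ∀ (m : EuclideanSpace ℝ (Fin d)), ∑ j : Fin K, ⟪w j, m⟫ = 0 := by
    intro m
    rw [← sum_inner, hS, inner_zero_left]
  have hK1' : 1 ≤ K := le_trans (by norm_num) hK
  have hcard : (((Finset.univ : Finset (Fin K)).erase k).card : ℝ) = (K:ℝ) - 1 := by
    rw [Finset.card_erase_of_mem (Finset.mem_univ k), Finset.card_univ, Fintype.card_fin,
      Nat.cast_sub hK1']
    norm_num
  have hT : ∀ m : EuclideanSpace ℝ (Fin d),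
      ∑ j ∈ Finset.univ.erase k, (⟪w j, m⟫ - ⟪w k, m⟫) = -(K:ℝ) * ⟪w k, m⟫ := by
    intro m
    rw [Finset.sum_sub_distrib, Finset.sum_erase_eq_sub (Finset.mem_univ k), hinm m,
      Finset.sum_const, nsmul_eq_mul, hcard]
    ring
  have hfac : ∀ m : EuclideanSpace ℝ (Fin d), (∑ j : Fin K, Real.exp ⟪w j, m⟫)
      = Real.exp ⟪w k, m⟫ *
        (1 + ∑ j ∈ Finset.univ.erase k, Real.exp (⟪w j, m⟫ - ⟪w k, m⟫)) := by
    intro m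
    rw [← Finset.add_sum_erase _ _ (Finset.mem_univ k), mul_add, mul_one, Finset.mul_sum]
    congr 1
    refine Finset.sum_congr rfl fun j _ => ?_
    rw [← Real.exp_add]
    congr 1
    ring
  have hp : ∀ m : EuclideanSpace ℝ (Fin d),
      Real.exp ⟪w k, m⟫ / (∑ j : Fin K, Real.exp ⟪w j, m⟫)
      = 1 / (1 + ∑ j ∈ Finset.univ.erase k, Real.exp (⟪w j, m⟫ - ⟪w k, m⟫)) := by
    intro m
    rw [hfac m, ← div_div, div_self (Real.exp_pos _).ne']
  have hTk : ∑ j ∈ Finset.univ.erase k, Real.exp (⟪w j, w k⟫ - ⟪w k, w k⟫)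
      = ((K:ℝ)-1) * Real.exp c := by
    have hterm : ∀ j ∈ Finset.univ.erase k,
        Real.exp (⟪w j, w k⟫ - ⟪w k, w k⟫) = Real.exp c := by
      intro j hj
      have hjk : j ≠ k := Finset.ne_of_mem_erase hj
      rw [hpair j k hjk, hself k]
      congr 1
      rw [hc]
      field_simp
      ring
    rw [Finset.sum_congr rfl hterm, Finset.sum_const, nsmul_eq_mul, hcard]
  have hval : Real.exp ⟪w k, w k⟫ / ∑ j : Fin K, Real.exp ⟪w j, w k⟫
      = 1 / (1 + ((K:ℝ)-1) * Real.exp c) := by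
    rw [hp (w k), hTk]
  have hTlb : ∀ m : EuclideanSpace ℝ (Fin d), ‖m‖ ≤ 1 →
      ((K:ℝ)-1) * Real.exp c ≤
        ∑ j ∈ Finset.univ.erase k, Real.exp (⟪w j, m⟫ - ⟪w k, m⟫) := by
    intro m hm
    have hwk : ⟪w k, m⟫ ≤ 1 := by
      calc ⟪w k, m⟫ ≤ ‖w k‖ * ‖m‖ := real_inner_le_norm _ _
        _ ≤ 1 := by rw [hunit k, one_mul]; exact hm
    have hsum : ∑ j ∈ Finset.univ.erase k, ((⟪w j, m⟫ - ⟪w k, m⟫) - c + 1)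
        = -(K:ℝ) * ⟪w k, m⟫ + (2*(K:ℝ) - 1) := by
      have h2 : ∀ j : Fin K, (⟪w j, m⟫ - ⟪w k, m⟫) - c + 1
          = (⟪w j, m⟫ - ⟪w k, m⟫) + (1 - c) := fun j => by ring
      rw [Finset.sum_congr rfl (fun j _ => h2 j), Finset.sum_add_distrib, hT m,
        Finset.sum_const, nsmul_eq_mul, hcard, hc]
      field_simp
      ring
    have hK0 : (0:ℝ) ≤ (K:ℝ) := by linarith
    have hge : ((K:ℝ)-1) ≤ ∑ j ∈ Finset.univ.erase k, ((⟪w j, m⟫ - ⟪w k, m⟫) - c + 1) := by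
      rw [hsum]
      nlinarith [mul_le_mul_of_nonneg_left hwk hK0]
    have step1 : ∀ j ∈ Finset.univ.erase k,
        Real.exp c * ((⟪w j, m⟫ - ⟪w k, m⟫) - c + 1) ≤ Real.exp (⟪w j, m⟫ - ⟪w k, m⟫) := by
      intro j _
      have h := Real.add_one_le_exp ((⟪w j, m⟫ - ⟪w k, m⟫) - c)
      calc Real.exp c * ((⟪w j, m⟫ - ⟪w k, m⟫) - c + 1)
          ≤ Real.exp c * Real.exp ((⟪w j, m⟫ - ⟪w k, m⟫) - c) :=
            mul_le_mul_of_nonneg_left h (Real.exp_pos c).le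
        _ = Real.exp (⟪w j, m⟫ - ⟪w k, m⟫) := by rw [← Real.exp_add]; congr 1; ring
    calc ((K:ℝ)-1) * Real.exp c = Real.exp c * ((K:ℝ)-1) := mul_comm _ _
      _ ≤ Real.exp c * ∑ j ∈ Finset.univ.erase k, ((⟪w j, m⟫ - ⟪w k, m⟫) - c + 1) :=
          mul_le_mul_of_nonneg_left hge (Real.exp_pos c).le
      _ = ∑ j ∈ Finset.univ.erase k, Real.exp c * ((⟪w j, m⟫ - ⟪w k, m⟫) - c + 1) :=
          Finset.mul_sum _ _ _
      _ ≤ ∑ j ∈ Finset.univ.erase k, Real.exp (⟪w j, m⟫ - ⟪w k, m⟫) :=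
          Finset.sum_le_sum step1
  refine ⟨hval, fun m hm => ?_⟩
  rw [hp m, hval]
  have hpos : (0:ℝ) < ((K:ℝ)-1) * Real.exp c := mul_pos hcpos (Real.exp_pos c)
  apply one_div_le_one_div_of_le
  · linarith
  · linarith [hTlb m hm]
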